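/- Let M = (E, I) be a matroid whose ground set is partitioned among n players with XOS valuations v_i : 2^{E_i} → ℝ≥0, and fix a selection rule g mapping each bid profile b : E → ℝ≥0 to some S ∈ I maximizing Σ_{t∈S} b_t over I. Suppose the bid profile b is a pure Nash equilibrium: for every player i and every alternative bid vector b'_i : E_i → ℝ≥0, letting b' agree with b'_i on E_i and with b elsewhere, v_i(g(b) ∩ E_i) − Σ_{t∈g(b)∩E_i} b_t ≥ v_i(g(b') ∩ E_i) − Σ_{t∈g(b')∩E_i} b'_i(t). Then the equilibrium welfare satisfies Σ_{i=1}^n v_i(g(b) ∩ E_i) ≥ (1/3)·OPT(v). (Every pure Nash equilibrium of the greedy first-price matroid mechanism achieves at least 1/3 of the optimal welfare.) -/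

import Mathlib

/-- A matroid on a finite ground set, given by its family of independent sets. -/
structure FinMatroid (E : Type*) [DecidableEq E] [Fintype E] where
  Indep : Finset E → Prop
  empty_indep : Indep ∅
  indep_subset : ∀ ⦃A B : Finset E⦄, Indep B → A ⊆ B → Indep A
  indep_exchange : ∀ ⦃A B : Finset E⦄, Indep A → Indep B → A.card < B.card →
    ∃ x ∈ B \ A, Indep (insert x A)

/-- `v` is an XOS (fractionally subadditive) valuation: a pointwise maximum of a
finite nonempty family of additive valuations with nonnegative weights. -/
def IsXOS {E : Type*} [DecidableEq E] (v : Finset E → ℝ) : Prop :=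
  ∃ L : Finset (E → ℝ), L.Nonempty ∧ (∀ w ∈ L, ∀ t, 0 ≤ w t) ∧
    ∀ X : Finset E, (∃ w ∈ L, v X = ∑ t ∈ X, w t) ∧ (∀ w ∈ L, ∑ t ∈ X, w t ≤ v X)

namespace FinMatroid

variable {E : Type*} [DecidableEq E] [Fintype E]

open Classical in
/-- rank of a set: max cardinality of an independent subset -/
noncomputable def rk (M : FinMatroid E) (A : Finset E) : ℕ :=
  A.powerset.sup (fun X => if M.Indep X then X.card else 0)

lemma card_le_rk (M : FinMatroid E) {X A : Finset E} (hXA : X ⊆ A) (hX : M.Indep X) :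
    X.card ≤ M.rk A := by
  classical
  have h := Finset.le_sup (f := fun X => if M.Indep X then X.card else 0)
    (Finset.mem_powerset.mpr hXA)
  rw [rk]
  simpa [hX] using h

lemma exists_basis (M : FinMatroid E) (A : Finset E) :
    ∃ X, X ⊆ A ∧ M.Indep X ∧ X.card = M.rk A := by
  classical
  obtain ⟨X, hX, hsup⟩ := Finset.exists_mem_eq_sup A.powerset ⟨∅, by simp⟩
    (fun X => if M.Indep X then X.card else 0)
  by_cases h : M.Indep X
  · exact ⟨X, Finset.mem_powerset.mp hX, h, by rw [rk, hsup, if_pos h]⟩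
  · refine ⟨∅, Finset.empty_subset _, M.empty_indep, ?_⟩
    rw [rk, hsup, if_neg h]
    simp

lemma rk_le_card (M : FinMatroid E) (A : Finset E) : M.rk A ≤ A.card := by
  classical
  apply Finset.sup_le
  intro X hX
  split
  · exact Finset.card_le_card (Finset.mem_powerset.mp hX)
  · exact Nat.zero_le _

lemma rk_mono (M : FinMatroid E) {A B : Finset E} (h : A ⊆ B) : M.rk A ≤ M.rk B := by
  obtain ⟨X, hXA, hX, hcard⟩ := M.exists_basis A
  rw [← hcard]
  exact M.card_le_rk (hXA.trans h) hX

lemma indep_iff_rk {M : FinMatroid E} {A : Finset E} : M.Indep A ↔ M.rk A = A.card := by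
  constructor
  · intro h
    exact le_antisymm (M.rk_le_card A) (M.card_le_rk (le_refl _) h)
  · intro h
    obtain ⟨X, hXA, hX, hcard⟩ := M.exists_basis A
    have : X = A := Finset.eq_of_subset_of_card_le hXA (by omega)
    rwa [← this]

private lemma aug_aux (M : FinMatroid E) (A : Finset E) :
    ∀ (k : ℕ) (I : Finset E), M.Indep I → I ⊆ A → M.rk A ≤ I.card + k →
    ∃ J, I ⊆ J ∧ J ⊆ A ∧ M.Indep J ∧ J.card = M.rk A := by
  intro k
  induction k with
  | zero =>
    intro I hI hIA hle
    have := M.card_le_rk hIA hI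
    exact ⟨I, le_refl _, hIA, hI, by omega⟩
  | succ k ih =>
    intro I hI hIA hle
    by_cases h : M.rk A ≤ I.card
    · have := M.card_le_rk hIA hI
      exact ⟨I, le_refl _, hIA, hI, by omega⟩
    · push_neg at h
      obtain ⟨B, hBA, hB, hBcard⟩ := M.exists_basis A
      obtain ⟨x, hx, hins⟩ := M.indep_exchange hI hB (by omega)
      have hxB : x ∈ B := (Finset.mem_sdiff.mp hx).1
      have hxI : x ∉ I := (Finset.mem_sdiff.mp hx).2
      obtain ⟨J, hIJ, hJA, hJ, hJcard⟩ := ih (insert x I) hins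
        (Finset.insert_subset (hBA hxB) hIA)
        (by rw [Finset.card_insert_of_notMem hxI]; omega)
      exact ⟨J, (Finset.subset_insert x I).trans hIJ, hJA, hJ, hJcard⟩

lemma exists_basis_containing (M : FinMatroid E) {I A : Finset E}
    (hI : M.Indep I) (hIA : I ⊆ A) :
    ∃ J, I ⊆ J ∧ J ⊆ A ∧ M.Indep J ∧ J.card = M.rk A :=
  M.aug_aux A (M.rk A) I hI hIA (by omega)

lemma rk_insert_le (M : FinMatroid E) (s : E) (A : Finset E) :
    M.rk (insert s A) ≤ M.rk A + 1 := by
  obtain ⟨J, hJA, hJ, hJcard⟩ := M.exists_basis (insert s A)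
  have h1 : J.erase s ⊆ A := by
    intro t ht
    have := hJA (Finset.mem_of_mem_erase ht)
    rcases Finset.mem_insert.mp this with h | h
    · exact absurd h (Finset.ne_of_mem_erase ht)
    · exact h
  have h2 : (J.erase s).card ≤ M.rk A :=
    M.card_le_rk h1 (M.indep_subset hJ (Finset.erase_subset s J))
  have h3 : J.card ≤ (J.erase s).card + 1 := by
    by_cases hs : s ∈ J
    · rw [Finset.card_erase_of_mem hs]; omega
    · rw [Finset.erase_eq_of_notMem hs]; omega
  omega

lemma rk_submod (M : FinMatroid E) (X Y : Finset E) :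
    M.rk (X ∪ Y) + M.rk (X ∩ Y) ≤ M.rk X + M.rk Y := by
  obtain ⟨I, hIXY, hI, hIcard⟩ := M.exists_basis (X ∩ Y)
  obtain ⟨J, hIJ, hJXY, hJ, hJcard⟩ := M.exists_basis_containing hI
    (hIXY.trans ((Finset.inter_subset_left).trans Finset.subset_union_left))
  have hJX : (J ∩ X).card ≤ M.rk X :=
    M.card_le_rk Finset.inter_subset_right (M.indep_subset hJ Finset.inter_subset_left)
  have hJY : (J ∩ Y).card ≤ M.rk Y :=
    M.card_le_rk Finset.inter_subset_right (M.indep_subset hJ Finset.inter_subset_left)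
  have hcount : (J ∩ X).card + (J ∩ Y).card = J.card + (J ∩ (X ∩ Y)).card := by
    have h1 : (J ∩ X) ∪ (J ∩ Y) = J := by
      rw [← Finset.inter_union_distrib_left]
      exact Finset.inter_eq_left.mpr hJXY
    have h2 : (J ∩ X) ∩ (J ∩ Y) = J ∩ (X ∩ Y) := by
      ext t; simp [Finset.mem_inter]; tauto
    have := Finset.card_union_add_card_inter (J ∩ X) (J ∩ Y)
    rw [h1, h2] at this
    omega
  have hIJXY : I ⊆ J ∩ (X ∩ Y) := fun t ht => Finset.mem_inter.mpr ⟨hIJ ht, hIXY ht⟩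
  have := Finset.card_le_card hIJXY
  omega

lemma rk_eq_zero_of_loops (M : FinMatroid E) {A : Finset E}
    (h : ∀ s ∈ A, ¬ M.Indep {s}) : M.rk A = 0 := by
  obtain ⟨J, hJA, hJ, hJcard⟩ := M.exists_basis A
  rcases Finset.eq_empty_or_nonempty J with rfl | ⟨s, hs⟩
  · simpa using hJcard.symm
  · exact absurd (M.indep_subset hJ (Finset.singleton_subset_iff.mpr hs)) (h s (hJA hs))

/-- contraction of a matroid by an independent set -/
def contract (M : FinMatroid E) (C : Finset E) (hC : M.Indep C) : FinMatroid E where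
  Indep X := Disjoint X C ∧ M.Indep (X ∪ C)
  empty_indep := ⟨Finset.disjoint_empty_left _, by simpa using hC⟩
  indep_subset := by
    intro A B hB hAB
    exact ⟨hB.1.mono_left hAB, M.indep_subset hB.2 (Finset.union_subset_union_left hAB)⟩
  indep_exchange := by
    intro A B hA hB hcard
    have hcard' : (A ∪ C).card < (B ∪ C).card := by
      rw [Finset.card_union_of_disjoint hA.1, Finset.card_union_of_disjoint hB.1]
      omega
    obtain ⟨x, hx, hins⟩ := M.indep_exchange hA.2 hB.2 hcard'
    rw [Finset.mem_sdiff, Finset.mem_union] at hx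
    obtain ⟨hxBC, hxAC⟩ := hx
    have hxC : x ∉ C := fun h => hxAC (Finset.mem_union_right _ h)
    have hxA : x ∉ A := fun h => hxAC (Finset.mem_union_left _ h)
    have hxB : x ∈ B := by tauto
    refine ⟨x, Finset.mem_sdiff.mpr ⟨hxB, hxA⟩, ?_, ?_⟩
    · exact Finset.disjoint_insert_left.mpr ⟨hxC, hA.1⟩
    · have : insert x A ∪ C = insert x (A ∪ C) := by
        rw [Finset.insert_union]
      rwa [this]

lemma rk_contract (M : FinMatroid E) (C : Finset E) (hC : M.Indep C) (X : Finset E)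
    (hX : Disjoint X C) : (M.contract C hC).rk X + C.card = M.rk (X ∪ C) := by
  apply le_antisymm
  · obtain ⟨Y, hYX, hY, hYcard⟩ := (M.contract C hC).exists_basis X
    obtain ⟨hYd, hYC⟩ := hY
    have : (Y ∪ C).card ≤ M.rk (X ∪ C) :=
      M.card_le_rk (Finset.union_subset_union_left hYX) hYC
    rw [Finset.card_union_of_disjoint hYd] at this
    omega
  · obtain ⟨J, hCJ, hJXC, hJ, hJcard⟩ := M.exists_basis_containing hC
      (Finset.subset_union_right : C ⊆ X ∪ C)
    have hYX : J \ C ⊆ X := by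
      intro t ht
      rw [Finset.mem_sdiff] at ht
      rcases Finset.mem_union.mp (hJXC ht.1) with h | h
      · exact h
      · exact absurd h ht.2
    have hJC : J \ C ∪ C = J := Finset.sdiff_union_of_subset hCJ
    have hYind : (M.contract C hC).Indep (J \ C) := ⟨Finset.sdiff_disjoint, by rwa [hJC]⟩
    have := (M.contract C hC).card_le_rk hYX hYind
    have hcard : (J \ C).card = J.card - C.card := Finset.card_sdiff_of_subset hCJ
    have hCle : C.card ≤ J.card := Finset.card_le_card hCJ
    omega

end FinMatroid
namespace FinMatroid

variable {E : Type*} [DecidableEq E] [Fintype E]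

theorem matroid_partition_aux :
    ∀ (m : ℕ) (N₁ N₂ : FinMatroid E) (S : Finset E), S.card ≤ m →
    (∀ A ⊆ S, A.card ≤ N₁.rk A + N₂.rk A) →
    ∃ Z ⊆ S, N₁.Indep (S \ Z) ∧ N₂.Indep Z := by
  intro m
  induction m with
  | zero =>
    intro N₁ N₂ S hS _
    have hSe : S = ∅ := Finset.card_eq_zero.mp (Nat.le_zero.mp hS)
    subst hSe
    exact ⟨∅, Finset.Subset.refl _, by simpa using N₁.empty_indep, N₂.empty_indep⟩
  | succ m ih =>
    intro N₁ N₂ S hScard h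
    classical
    rcases Finset.eq_empty_or_nonempty S with rfl | hSne
    · exact ⟨∅, Finset.Subset.refl _, by simpa using N₁.empty_indep, N₂.empty_indep⟩
    by_cases htight : ∃ A, A ⊆ S ∧ A.Nonempty ∧ A ≠ S ∧ N₁.rk A + N₂.rk A = A.card
    · -- case: proper nonempty tight set A
      obtain ⟨A, hAS, hAne, hAneS, htA⟩ := htight
      have hAlt : A.card < S.card := Finset.card_lt_card (Finset.ssubset_iff_subset_ne.mpr ⟨hAS, hAneS⟩)
      have hSAcard : (S \ A).card + A.card = S.card := Finset.card_sdiff_add_card_eq_card hAS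
      -- subproblem 1 on A
      obtain ⟨ZA, hZA, hI1, hI2⟩ := ih N₁ N₂ A (by omega) (fun B hB => h B (hB.trans hAS))
      set A₁ : Finset E := A \ ZA with hA₁def
      have hA₁A : A₁ ⊆ A := Finset.sdiff_subset
      have hA₁A₂ : A₁.card + ZA.card = A.card := Finset.card_sdiff_add_card_eq_card hZA
      have rkA₁ : N₁.rk A₁ = A₁.card := indep_iff_rk.mp hI1
      have rkA₂ : N₂.rk ZA = ZA.card := indep_iff_rk.mp hI2
      -- subproblem 2 on S \ A with contracted matroids
      have hcond : ∀ B ⊆ S \ A, B.card ≤ (N₁.contract A₁ hI1).rk B + (N₂.contract ZA hI2).rk B := by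
        intro B hB
        have hBA : Disjoint B A := by
          rw [Finset.disjoint_left]
          intro t ht hta
          exact (Finset.mem_sdiff.mp (hB ht)).2 hta
        have hd1 : Disjoint B A₁ := hBA.mono_right hA₁A
        have hd2 : Disjoint B ZA := hBA.mono_right hZA
        have e1 := N₁.rk_contract A₁ hI1 B hd1
        have e2 := N₂.rk_contract ZA hI2 B hd2
        have hsub1 := N₁.rk_submod (B ∪ A₁) A
        have hsub2 := N₂.rk_submod (B ∪ ZA) A
        have hu1 : (B ∪ A₁) ∪ A = B ∪ A := by
          ext t
          simp only [Finset.mem_union]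
          constructor
          · rintro ((h | h) | h)
            · exact Or.inl h
            · exact Or.inr (hA₁A h)
            · exact Or.inr h
          · rintro (h | h)
            · exact Or.inl (Or.inl h)
            · exact Or.inr h
        have hi1 : (B ∪ A₁) ∩ A = A₁ := by
          ext t
          simp only [Finset.mem_inter, Finset.mem_union]
          constructor
          · rintro ⟨h | h, hA⟩
            · exact absurd hA (Finset.disjoint_left.mp hBA h)
            · exact h
          · intro h
            exact ⟨Or.inr h, hA₁A h⟩
        have hu2 : (B ∪ ZA) ∪ A = B ∪ A := by
          ext t
          simp only [Finset.mem_union]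
          constructor
          · rintro ((h | h) | h)
            · exact Or.inl h
            · exact Or.inr (hZA h)
            · exact Or.inr h
          · rintro (h | h)
            · exact Or.inl (Or.inl h)
            · exact Or.inr h
        have hi2 : (B ∪ ZA) ∩ A = ZA := by
          ext t
          simp only [Finset.mem_inter, Finset.mem_union]
          constructor
          · rintro ⟨h | h, hA⟩
            · exact absurd hA (Finset.disjoint_left.mp hBA h)
            · exact h
          · intro h
            exact ⟨Or.inr h, hZA h⟩
        rw [hu1, hi1] at hsub1
        rw [hu2, hi2] at hsub2
        have hBAcard : (B ∪ A).card = B.card + A.card := Finset.card_union_of_disjoint hBA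
        have hBAS : B ∪ A ⊆ S := Finset.union_subset (hB.trans Finset.sdiff_subset) hAS
        have hcondBA := h (B ∪ A) hBAS
        omega
      have hSAlt : (S \ A).card ≤ m := by
        have := hAne.card_pos
        omega
      obtain ⟨ZB, hZB, hB1, hB2⟩ := ih (N₁.contract A₁ hI1) (N₂.contract ZA hI2) (S \ A) hSAlt hcond
      refine ⟨ZA ∪ ZB, Finset.union_subset (hZA.trans hAS) (hZB.trans Finset.sdiff_subset), ?_, ?_⟩
      · have hseteq : S \ (ZA ∪ ZB) = ((S \ A) \ ZB) ∪ A₁ := by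
          ext t
          simp only [Finset.mem_sdiff, Finset.mem_union, hA₁def]
          have f1 : t ∈ ZA → t ∈ A := fun ht => hZA ht
          have f2 : t ∈ ZB → t ∈ S ∧ t ∉ A := fun ht => Finset.mem_sdiff.mp (hZB ht)
          have f3 : t ∈ A → t ∈ S := fun ht => hAS ht
          constructor
          · rintro ⟨htS, hno⟩
            push_neg at hno
            by_cases htA' : t ∈ A
            · exact Or.inr ⟨htA', hno.1⟩
            · exact Or.inl ⟨⟨htS, htA'⟩, hno.2⟩
          · rintro (⟨⟨htS, htA'⟩, htZB⟩ | ⟨htA', htZA⟩)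
            · exact ⟨htS, by push_neg; exact ⟨fun hc => htA' (f1 hc), htZB⟩⟩
            · exact ⟨f3 htA', by push_neg; exact ⟨htZA, fun hc => (f2 hc).2 htA'⟩⟩
        rw [hseteq]
        exact hB1.2
      · have hseteq2 : ZA ∪ ZB = ZB ∪ ZA := Finset.union_comm _ _
        rw [hseteq2]
        exact hB2.2
    · -- case: no proper nonempty tight set
      push_neg at htight
      have hstrict : ∀ A, A ⊆ S → A.Nonempty → A ≠ S → A.card + 1 ≤ N₁.rk A + N₂.rk A := by
        intro A h1 h2 h3
        have := h A h1
        have := htight A h1 h2 h3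
        omega
      by_cases hr1 : N₁.rk S = 0
      · have h2 : S.card ≤ N₂.rk S := by have := h S (Finset.Subset.refl _); omega
        have hS2 : N₂.Indep S := indep_iff_rk.mpr (le_antisymm (N₂.rk_le_card S) h2)
        exact ⟨S, Finset.Subset.refl _, by simpa using N₁.empty_indep, hS2⟩
      · -- find a good element s
        have hs_ex : ∃ s ∈ S, N₁.Indep {s} ∧ S.card ≤ N₁.rk S + N₂.rk (S \ {s}) := by
          by_contra hno
          push_neg at hno
          set K : Finset E := S.filter (fun s => N₁.Indep {s}) with hKdef
          have hKne : K.Nonempty := by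
            by_contra hK
            rw [Finset.not_nonempty_iff_eq_empty] at hK
            apply hr1
            apply N₁.rk_eq_zero_of_loops
            intro s hs hind
            have : s ∈ K := Finset.mem_filter.mpr ⟨hs, hind⟩
            rw [hK] at this
            exact absurd this (Finset.notMem_empty s)
          have hk1 : ∀ k ∈ K, N₁.rk S + N₂.rk (S \ {k}) + 1 ≤ S.card := by
            intro k hk
            have hkS := (Finset.mem_filter.mp hk).1
            have hkI := (Finset.mem_filter.mp hk).2
            have := hno k hkS hkI
            omega
          have hrk2drop : ∀ k ∈ K, N₂.rk S ≤ N₂.rk (S \ {k}) + 1 := by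
            intro k hk
            have hkS := (Finset.mem_filter.mp hk).1
            have hins : insert k (S \ {k}) = S := by
              rw [Finset.sdiff_singleton_eq_erase, Finset.insert_erase hkS]
            calc N₂.rk S = N₂.rk (insert k (S \ {k})) := by rw [hins]
              _ ≤ N₂.rk (S \ {k}) + 1 := N₂.rk_insert_le _ _
          have htightS : N₁.rk S + N₂.rk S = S.card := by
            obtain ⟨k, hk⟩ := hKne
            have h1 := hk1 k hk
            have h2 := hrk2drop k hk
            have h3 := h S (Finset.Subset.refl _)
            omega
          have hpeel : ∀ K' : Finset E, K' ⊆ K → N₂.rk (S \ K') + K'.card ≤ N₂.rk S := by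
            intro K'
            induction K' using Finset.induction_on with
            | empty => simp
            | @insert k K' hkK' ih' =>
              intro hins
              have hk : k ∈ K := hins (Finset.mem_insert_self _ _)
              have hK'sub : K' ⊆ K := (Finset.subset_insert _ _).trans hins
              have ihh := ih' hK'sub
              have hXuY : (S \ {k}) ∪ (S \ K') = S := by
                ext t
                simp only [Finset.mem_union, Finset.mem_sdiff, Finset.mem_singleton]
                constructor
                · rintro (⟨h1, _⟩ | ⟨h1, _⟩) <;> exact h1
                · intro htS
                  by_cases htk : t = k
                  · subst htk
                    exact Or.inr ⟨htS, hkK'⟩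
                  · exact Or.inl ⟨htS, htk⟩
              have hXiY : (S \ {k}) ∩ (S \ K') = S \ insert k K' := by
                ext t
                simp only [Finset.mem_inter, Finset.mem_sdiff, Finset.mem_singleton,
                  Finset.mem_insert]
                tauto
              have hsub := N₂.rk_submod (S \ {k}) (S \ K')
              rw [hXuY, hXiY] at hsub
              have h5 := hk1 k hk
              have h6 := h S (Finset.Subset.refl _)
              have hcardins : (insert k K').card = K'.card + 1 :=
                Finset.card_insert_of_notMem hkK'
              omega
          have hL0 : N₁.rk (S \ K) = 0 := by
            apply N₁.rk_eq_zero_of_loops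
            intro s hs hind
            have hsS := (Finset.mem_sdiff.mp hs).1
            have hsK := (Finset.mem_sdiff.mp hs).2
            exact hsK (Finset.mem_filter.mpr ⟨hsS, hind⟩)
          have hLcond := h (S \ K) Finset.sdiff_subset
          have hpK := hpeel K (Finset.Subset.refl _)
          have hcards : (S \ K).card + K.card = S.card :=
            Finset.card_sdiff_add_card_eq_card (Finset.filter_subset _ _)
          omega
        obtain ⟨s, hsS, hsInd, hsle⟩ := hs_ex
        have hcond : ∀ A ⊆ S \ {s}, A.card ≤ (N₁.contract {s} hsInd).rk A + N₂.rk A := by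
          intro A hA
          have hsA : s ∉ A := fun hc => (Finset.mem_sdiff.mp (hA hc)).2 (Finset.mem_singleton_self s)
          have hdisj : Disjoint A {s} := by
            rw [Finset.disjoint_right]
            intro t ht
            rw [Finset.mem_singleton] at ht
            subst ht
            exact hsA
          have e1 := N₁.rk_contract {s} hsInd A hdisj
          have hunion : A ∪ {s} = insert s A := by
            rw [Finset.union_comm, ← Finset.insert_eq]
          rw [hunion] at e1
          simp only [Finset.card_singleton] at e1
          by_cases hAS : insert s A = S
          · have hAeq : A = S \ {s} := by
              ext t
              simp only [Finset.mem_sdiff, Finset.mem_singleton]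
              constructor
              · intro ht
                refine ⟨by rw [← hAS]; exact Finset.mem_insert_of_mem ht, ?_⟩
                intro hc; subst hc; exact hsA ht
              · rintro ⟨htS, hts⟩
                rw [← hAS] at htS
                rcases Finset.mem_insert.mp htS with hc | hc
                · exact absurd hc hts
                · exact hc
            have hcardA : A.card + 1 = S.card := by
              rw [hAeq]
              have := Finset.card_sdiff_add_card_eq_card (Finset.singleton_subset_iff.mpr hsS)
              simp only [Finset.card_singleton] at this
              omega
            rw [hAS] at e1
            have hA2 : N₂.rk A = N₂.rk (S \ {s}) := by rw [hAeq]
            omega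
          · have hstrictA := hstrict (insert s A)
              (Finset.insert_subset hsS (hA.trans Finset.sdiff_subset))
              (Finset.insert_nonempty _ _) hAS
            have hcardins : (insert s A).card = A.card + 1 :=
              Finset.card_insert_of_notMem hsA
            have hrk2ins := N₂.rk_insert_le s A
            omega
        have hScard' : (S \ {s}).card ≤ m := by
          have := Finset.card_sdiff_add_card_eq_card (Finset.singleton_subset_iff.mpr hsS)
          simp only [Finset.card_singleton] at this
          omega
        obtain ⟨Z, hZ, h1', h2'⟩ := ih (N₁.contract {s} hsInd) N₂ (S \ {s}) hScard' hcond
        refine ⟨Z, hZ.trans Finset.sdiff_subset, ?_, h2'⟩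
        have hsZ : s ∉ Z := fun hc => (Finset.mem_sdiff.mp (hZ hc)).2 (Finset.mem_singleton_self s)
        have hseteq : S \ Z = ((S \ {s}) \ Z) ∪ {s} := by
          ext t
          simp only [Finset.mem_sdiff, Finset.mem_union, Finset.mem_singleton]
          constructor
          · rintro ⟨htS, htZ⟩
            by_cases hts : t = s
            · exact Or.inr hts
            · exact Or.inl ⟨⟨htS, hts⟩, htZ⟩
          · rintro (⟨⟨htS, _⟩, htZ⟩ | hts)
            · exact ⟨htS, htZ⟩
            · subst hts
              exact ⟨hsS, hsZ⟩
        rw [hseteq]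
        exact h1'.2

theorem matroid_partition (N₁ N₂ : FinMatroid E) (S : Finset E)
    (h : ∀ A ⊆ S, A.card ≤ N₁.rk A + N₂.rk A) :
    ∃ Z ⊆ S, N₁.Indep (S \ Z) ∧ N₂.Indep Z :=
  matroid_partition_aux S.card N₁ N₂ S (le_refl _) h

end FinMatroid
namespace FinMatroid

variable {E : Type*} [DecidableEq E] [Fintype E]

lemma mem_foldr_union {l : List (Finset E)} {t : E} :
    t ∈ l.foldr (· ∪ ·) ∅ ↔ ∃ X ∈ l, t ∈ X := by
  induction l with
  | nil => simp
  | cons X l ih => simp [ih]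

theorem partition_ext (Os : List (Finset E)) :
    ∀ (M : FinMatroid E) (S : Finset E),
      M.Indep S → M.Indep (Os.foldr (· ∪ ·) ∅) →
      (∀ O ∈ Os, Disjoint O S) → Os.Pairwise Disjoint →
      ∃ Zs : List (Finset E), Zs.length = Os.length ∧ (∀ Z ∈ Zs, Z ⊆ S) ∧
        Zs.Pairwise Disjoint ∧
        ∀ (k : ℕ) (h₁ : k < Zs.length) (h₂ : k < Os.length),
          M.Indep ((S \ Zs.get ⟨k, h₁⟩) ∪ Os.get ⟨k, h₂⟩) := by
  induction Os with
  | nil =>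
    intro M S _ _ _ _
    exact ⟨[], rfl, by simp, List.Pairwise.nil, by intro k h₁ h₂; simp at h₂⟩
  | cons O rest ih =>
    intro M S hS hO hdisj hpw
    classical
    set R := rest.foldr (· ∪ ·) ∅ with hRdef
    have hOR : M.Indep (O ∪ R) := by simpa using hO
    have hOI : M.Indep O := M.indep_subset hOR Finset.subset_union_left
    have hRI : M.Indep R := M.indep_subset hOR Finset.subset_union_right
    have hpw' := (List.pairwise_cons.mp hpw)
    have hOdisjR : Disjoint O R := by
      rw [Finset.disjoint_right]
      intro t htR htO
      obtain ⟨X, hX, htX⟩ := mem_foldr_union.mp htR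
      exact Finset.disjoint_left.mp (hpw'.1 X hX) htO htX
    have hOS : Disjoint O S := hdisj O List.mem_cons_self
    have hRS : Disjoint R S := by
      rw [Finset.disjoint_left]
      intro t htR htS
      obtain ⟨X, hX, htX⟩ := mem_foldr_union.mp htR
      exact Finset.disjoint_left.mp (hdisj X (List.mem_cons_of_mem _ hX)) htX htS
    have hfeas : ∀ A ⊆ S, A.card ≤ (M.contract O hOI).rk A + (M.contract R hRI).rk A := by
      intro A hA
      have hAO : Disjoint A O := (hOS.mono_right hA).symm
      have hAR : Disjoint A R := (hRS.mono_right hA).symm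
      have e1 := M.rk_contract O hOI A hAO
      have e2 := M.rk_contract R hRI A hAR
      have hsub := M.rk_submod (A ∪ O) (A ∪ R)
      have hu : (A ∪ O) ∪ (A ∪ R) = A ∪ (O ∪ R) := by
        ext t
        simp only [Finset.mem_union]
        tauto
      have hi : (A ∪ O) ∩ (A ∪ R) = A := by
        ext t
        simp only [Finset.mem_inter, Finset.mem_union]
        constructor
        · rintro ⟨hl, hr⟩
          rcases hl with h | h
          · exact h
          · rcases hr with h' | h'
            · exact h'
            · exact absurd h' (Finset.disjoint_left.mp hOdisjR h)
        · intro h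
          exact ⟨Or.inl h, Or.inl h⟩
      rw [hu, hi] at hsub
      have hORcard : (O ∪ R).card = O.card + R.card := Finset.card_union_of_disjoint hOdisjR
      have hrkOR : M.rk (O ∪ R) = (O ∪ R).card := indep_iff_rk.mp hOR
      have hle : M.rk (O ∪ R) ≤ M.rk (A ∪ (O ∪ R)) := M.rk_mono Finset.subset_union_right
      have hrkA : M.rk A = A.card := indep_iff_rk.mp (M.indep_subset hS hA)
      omega
    obtain ⟨Z, hZS, hZ1, hZ2⟩ := matroid_partition (M.contract O hOI) (M.contract R hRI) S hfeas
    have hZI : M.Indep Z := M.indep_subset hZ2.2 Finset.subset_union_left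
    have hS' : (M.contract Z hZI).Indep (S \ Z) :=
      ⟨Finset.sdiff_disjoint, by rwa [Finset.sdiff_union_of_subset hZS]⟩
    have hR' : (M.contract Z hZI).Indep R := by
      refine ⟨hRS.mono_right hZS, ?_⟩
      have : Z ∪ R = R ∪ Z := Finset.union_comm _ _
      exact M.indep_subset hZ2.2 (by rw [this])
    have hdisj' : ∀ O' ∈ rest, Disjoint O' (S \ Z) :=
      fun O' hm => (hdisj O' (List.mem_cons_of_mem _ hm)).mono_right Finset.sdiff_subset
    obtain ⟨Zs, hlen, hsub', hpws, hind'⟩ := ih (M.contract Z hZI) (S \ Z) hS' hR' hdisj' hpw'.2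
    refine ⟨Z :: Zs, by simp [hlen], ?_, ?_, ?_⟩
    · intro Z' hZ'
      rcases List.mem_cons.mp hZ' with rfl | hm
      · exact hZS
      · exact (hsub' Z' hm).trans Finset.sdiff_subset
    · rw [List.pairwise_cons]
      refine ⟨fun Z' hm => ?_, hpws⟩
      exact ((Finset.sdiff_disjoint (t := S) (s := Z)).symm).mono_right (hsub' Z' hm)
    · intro k h₁ h₂
      match k with
      | 0 => exact hZ1.2
      | Nat.succ k =>
        have h₁' : k < Zs.length := by
          simp only [List.length_cons] at h₁
          omega
        have h₂' : k < rest.length := by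
          simp only [List.length_cons] at h₂
          omega
        have hrec := hind' k h₁' h₂'
        have hgoal_get₁ : (Z :: Zs).get ⟨k + 1, h₁⟩ = Zs.get ⟨k, h₁'⟩ := rfl
        have hgoal_get₂ : (O :: rest).get ⟨k + 1, h₂⟩ = rest.get ⟨k, h₂'⟩ := rfl
        rw [hgoal_get₁, hgoal_get₂]
        set Zk := Zs.get ⟨k, h₁'⟩ with hZkdef
        set Ok := rest.get ⟨k, h₂'⟩ with hOkdef
        have hZkS : Zk ⊆ S \ Z := hsub' Zk (List.get_mem _ _)
        have hseteq : (S \ Zk) ∪ Ok = ((((S \ Z) \ Zk) ∪ Ok) ∪ Z) := by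
          ext t
          simp only [Finset.mem_union, Finset.mem_sdiff]
          have f1 : t ∈ Z → t ∈ S := fun ht => hZS ht
          have f2 : t ∈ Z → t ∉ Zk := fun ht htk =>
            (Finset.mem_sdiff.mp (hZkS htk)).2 ht
          constructor
          · rintro (⟨htS, htZk⟩ | htO)
            · by_cases htZ : t ∈ Z
              · exact Or.inr htZ
              · exact Or.inl (Or.inl ⟨⟨htS, htZ⟩, htZk⟩)
            · exact Or.inl (Or.inr htO)
          · rintro ((⟨⟨htS, _⟩, htZk⟩ | htO) | htZ)
            · exact Or.inl ⟨htS, htZk⟩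
            · exact Or.inr htO
            · exact Or.inl ⟨f1 htZ, f2 htZ⟩
        rw [hseteq]
        exact hrec.2

end FinMatroid
namespace FinMatroid

variable {E : Type*} [DecidableEq E] [Fintype E]

lemma contract_indep_iff (M : FinMatroid E) (C : Finset E) (hC : M.Indep C) (X : Finset E) :
    (M.contract C hC).Indep X ↔ Disjoint X C ∧ M.Indep (X ∪ C) := Iff.rfl

end FinMatroid


/-- **Price of anarchy of the greedy first-price matroid mechanism.**
The ground set is partitioned among `n` players via `player : E → Fin n`, each with
an XOS valuation.  `g` is a selection rule mapping each nonnegative bid profile to a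
max-weight independent set (the greedy outcome); player `i` receives `g b ∩ E_i` and
pays her bids there.  If the nonnegative bid profile `b` is a pure Nash equilibrium,
then the equilibrium welfare is at least `(1/3)·OPT(v)`, where `Sopt` attains the
optimal welfare `OPT(v)` over independent sets. -/
theorem greedy_matroid_poa
    {E : Type*} [DecidableEq E] [Fintype E] (M : FinMatroid E)
    (n : ℕ) (player : E → Fin n)
    (v : Fin n → Finset E → ℝ) (hv : ∀ i, IsXOS (v i))
    (g : (E → ℝ) → Finset E)
    (hg : ∀ b : E → ℝ, (∀ t, 0 ≤ b t) → M.Indep (g b) ∧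
      ∀ S : Finset E, M.Indep S → ∑ t ∈ S, b t ≤ ∑ t ∈ g b, b t)
    (Sopt : Finset E) (hSopt : M.Indep Sopt)
    (hSoptOpt : ∀ S : Finset E, M.Indep S →
      (∑ i : Fin n, v i (S.filter (fun t => player t = i))) ≤
        ∑ i : Fin n, v i (Sopt.filter (fun t => player t = i)))
    (b : E → ℝ) (hb : ∀ t, 0 ≤ b t)
    (hNash : ∀ i : Fin n, ∀ b' : E → ℝ, (∀ t, 0 ≤ b' t) →
      (v i ((g b).filter (fun t => player t = i)) -
          ∑ t ∈ (g b).filter (fun t => player t = i), b t) ≥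
        (v i ((g (fun t => if player t = i then b' t else b t)).filter
              (fun t => player t = i)) -
          ∑ t ∈ (g (fun t => if player t = i then b' t else b t)).filter
              (fun t => player t = i), b' t)) :
    (∑ i : Fin n, v i ((g b).filter (fun t => player t = i))) ≥
      (1/3) * ∑ i : Fin n, v i (Sopt.filter (fun t => player t = i)) := by
  classical
  obtain ⟨hSind, hSmax⟩ := hg b hb
  set S : Finset E := g b with hSdef
  -- the partition machinery
  have hC0 : M.Indep (Sopt ∩ S) := M.indep_subset hSind Finset.inter_subset_right
  set Os : List (Finset E) :=
    (List.finRange n).map (fun i => (Sopt.filter (fun t => player t = i)) \ S) with hOsdef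
  have hfold : Os.foldr (· ∪ ·) ∅ = Sopt \ S := by
    ext t
    rw [FinMatroid.mem_foldr_union]
    constructor
    · rintro ⟨X, hX, ht⟩
      rw [hOsdef] at hX
      obtain ⟨j, -, rfl⟩ := List.mem_map.mp hX
      obtain ⟨ht1, ht2⟩ := Finset.mem_sdiff.mp ht
      exact Finset.mem_sdiff.mpr ⟨(Finset.mem_filter.mp ht1).1, ht2⟩
    · intro ht
      obtain ⟨ht1, ht2⟩ := Finset.mem_sdiff.mp ht
      refine ⟨(Sopt.filter (fun s => player s = player t)) \ S, ?_, ?_⟩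
      · rw [hOsdef]
        exact List.mem_map.mpr ⟨player t, List.mem_finRange _, rfl⟩
      · exact Finset.mem_sdiff.mpr ⟨Finset.mem_filter.mpr ⟨ht1, rfl⟩, ht2⟩
  have hS0 : (M.contract (Sopt ∩ S) hC0).Indep (S \ Sopt) := by
    refine ⟨?_, ?_⟩
    · rw [Finset.disjoint_left]
      intro t ht hti
      exact (Finset.mem_sdiff.mp ht).2 (Finset.mem_inter.mp hti).1
    · have heq : (S \ Sopt) ∪ (Sopt ∩ S) = S := by
        ext t
        simp only [Finset.mem_union, Finset.mem_sdiff, Finset.mem_inter]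
        tauto
      rwa [heq]
  have hOs0 : (M.contract (Sopt ∩ S) hC0).Indep (Os.foldr (· ∪ ·) ∅) := by
    rw [hfold]
    refine ⟨?_, ?_⟩
    · rw [Finset.disjoint_left]
      intro t ht hti
      exact (Finset.mem_sdiff.mp ht).2 (Finset.mem_inter.mp hti).2
    · have heq : (Sopt \ S) ∪ (Sopt ∩ S) = Sopt := by
        ext t
        simp only [Finset.mem_union, Finset.mem_sdiff, Finset.mem_inter]
        tauto
      rwa [heq]
  have hdisjOs : ∀ O' ∈ Os, Disjoint O' (S \ Sopt) := by
    intro O' hO'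
    rw [hOsdef] at hO'
    obtain ⟨j, -, rfl⟩ := List.mem_map.mp hO'
    rw [Finset.disjoint_left]
    intro t ht hts
    exact (Finset.mem_sdiff.mp ht).2 (Finset.mem_sdiff.mp hts).1
  have hpwOs : Os.Pairwise Disjoint := by
    rw [hOsdef, List.pairwise_map]
    have hne := List.nodup_finRange n
    refine hne.imp ?_
    intro a b' hab
    rw [Finset.disjoint_left]
    intro t ht ht'
    apply hab
    have h1 := (Finset.mem_filter.mp (Finset.mem_sdiff.mp ht).1).2
    have h2 := (Finset.mem_filter.mp (Finset.mem_sdiff.mp ht').1).2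
    rw [← h1, ← h2]
  obtain ⟨Zs, hlen, hZsub, hZpw, hZind⟩ :=
    FinMatroid.partition_ext Os (M.contract (Sopt ∩ S) hC0) (S \ Sopt) hS0 hOs0 hdisjOs hpwOs
  have hlenOs : Os.length = n := by simp [hOsdef]
  have hlenZ : Zs.length = n := hlen.trans hlenOs
  set Zf : Fin n → Finset E := fun i => Zs.get (Fin.cast hlenZ.symm i) with hZfdef
  have hZfsub : ∀ i : Fin n, Zf i ⊆ S \ Sopt := fun i => hZsub _ (List.get_mem _ _)
  have hOsget : ∀ (j : Fin n) (hj : (j : ℕ) < Os.length),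
      Os.get ⟨j, hj⟩ = (Sopt.filter (fun t => player t = j)) \ S := by
    intro j hj
    simp [hOsdef, List.get_eq_getElem, List.getElem_map, List.getElem_finRange]
  -- per player data
  set B : ℝ := ∑ t ∈ S, b t with hBdef
  have key : ∀ i : Fin n,
      (2/3) * v i (Sopt.filter (fun t => player t = i)) ≤
        2 * v i (S.filter (fun t => player t = i))
          - 2 * (∑ t ∈ S.filter (fun t => player t = i), b t)
          + (∑ t ∈ S.filter (fun t => player t = i), b t)
          + (∑ t ∈ Zf i, b t) := by
    intro i
    obtain ⟨L, hLne, hLpos, hLprop⟩ := hv i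
    obtain ⟨w, hwL, hwOi⟩ := (hLprop (Sopt.filter (fun t => player t = i))).1
    set Oi : Finset E := Sopt.filter (fun t => player t = i) with hOidef
    set β : E → ℝ := fun t => if t ∈ Oi then (2/3) * w t else 0 with hβdef
    have hβ0 : ∀ t, 0 ≤ β t := by
      intro t
      rw [hβdef]
      dsimp only
      split
      · have := hLpos w hwL t
        linarith
      · exact le_refl 0
    have hN := hNash i β hβ0
    set c : E → ℝ := fun t => if player t = i then β t else b t with hcdef
    have hc0 : ∀ t, 0 ≤ c t := by
      intro t
      rw [hcdef]
      dsimp only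
      split
      · exact hβ0 t
      · exact hb t
    obtain ⟨hTind, hTmax⟩ := hg c hc0
    set T : Finset E := g c with hTdef
    -- the comparison independent set Vi
    have h₁ : (i : ℕ) < Zs.length := by rw [hlenZ]; exact i.isLt
    have h₂ : (i : ℕ) < Os.length := by rw [hlenOs]; exact i.isLt
    have hVi0 := hZind i.1 h₁ h₂
    rw [hOsget i h₂] at hVi0
    have hZfi : Zf i = Zs.get ⟨(i : ℕ), h₁⟩ := rfl
    rw [← hZfi] at hVi0
    rw [FinMatroid.contract_indep_iff] at hVi0
    set Vi : Finset E := (((S \ Sopt) \ Zf i) ∪ (Oi \ S)) ∪ (Sopt ∩ S) with hVidef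
    have hViind : M.Indep Vi := hVi0.2
    -- memberships
    have hOiV : Oi ⊆ Vi.filter (fun t => player t = i) := by
      intro t ht
      have htO := Finset.mem_filter.mp ht
      refine Finset.mem_filter.mpr ⟨?_, htO.2⟩
      rw [hVidef]
      by_cases htS : t ∈ S
      · exact Finset.mem_union_right _ (Finset.mem_inter.mpr ⟨htO.1, htS⟩)
      · exact Finset.mem_union_left _
          (Finset.mem_union_right _ (Finset.mem_sdiff.mpr ⟨ht, htS⟩))
    have hSniV : (S.filter (fun t => ¬ player t = i)) \ Zf i ⊆
        Vi.filter (fun t => ¬ player t = i) := by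
      intro t ht
      obtain ⟨ht1, htZ⟩ := Finset.mem_sdiff.mp ht
      obtain ⟨htS, htp⟩ := Finset.mem_filter.mp ht1
      refine Finset.mem_filter.mpr ⟨?_, htp⟩
      rw [hVidef]
      by_cases htO : t ∈ Sopt
      · exact Finset.mem_union_right _ (Finset.mem_inter.mpr ⟨htO, htS⟩)
      · exact Finset.mem_union_left _ (Finset.mem_union_left _
          (Finset.mem_sdiff.mpr ⟨Finset.mem_sdiff.mpr ⟨htS, htO⟩, htZ⟩))
    -- lower bound for sum over Vi
    have hsplitV := Finset.sum_filter_add_sum_filter_not Vi (fun t => player t = i) c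
    have hVnotb : ∑ t ∈ Vi.filter (fun t => ¬ player t = i), c t
        = ∑ t ∈ Vi.filter (fun t => ¬ player t = i), b t := by
      refine Finset.sum_congr rfl (fun t ht => ?_)
      have htp := (Finset.mem_filter.mp ht).2
      rw [hcdef]
      dsimp only
      rw [if_neg htp]
    have hlow1 : ∑ t ∈ Oi, c t ≤ ∑ t ∈ Vi.filter (fun t => player t = i), c t :=
      Finset.sum_le_sum_of_subset_of_nonneg hOiV (fun t _ _ => hc0 t)
    have hOic : ∑ t ∈ Oi, c t = (2/3) * v i Oi := by
      have hstep : ∀ t ∈ Oi, c t = (2/3) * w t := by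
        intro t ht
        have htp := (Finset.mem_filter.mp ht).2
        rw [hcdef]
        dsimp only
        rw [if_pos htp, hβdef]
        dsimp only
        rw [if_pos ht]
      rw [Finset.sum_congr rfl hstep, ← Finset.mul_sum, ← hwOi]
    have hlow2 : ∑ t ∈ (S.filter (fun t => ¬ player t = i)) \ Zf i, b t ≤
        ∑ t ∈ Vi.filter (fun t => ¬ player t = i), b t :=
      Finset.sum_le_sum_of_subset_of_nonneg hSniV (fun t _ _ => hb t)
    -- ∑ over (Sni \ Zf i) ≥ ∑ Sni - ∑ Zf i
    have hsni : ∑ t ∈ S.filter (fun t => ¬ player t = i), b t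
        ≤ (∑ t ∈ (S.filter (fun t => ¬ player t = i)) \ Zf i, b t) + ∑ t ∈ Zf i, b t := by
      have hsplit := Finset.sum_filter_add_sum_filter_not
        (S.filter (fun t => ¬ player t = i)) (fun t => t ∈ Zf i) b
      have he1 : (S.filter (fun t => ¬ player t = i)).filter (fun t => ¬ t ∈ Zf i)
          = (S.filter (fun t => ¬ player t = i)) \ Zf i := by
        ext t
        simp only [Finset.mem_filter, Finset.mem_sdiff]
      have he2 : ∑ t ∈ (S.filter (fun t => ¬ player t = i)).filter (fun t => t ∈ Zf i), b t
          ≤ ∑ t ∈ Zf i, b t := by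
        apply Finset.sum_le_sum_of_subset_of_nonneg
        · intro t ht
          exact (Finset.mem_filter.mp ht).2
        · exact fun t _ _ => hb t
      rw [he1] at hsplit
      linarith
    have hpay := Finset.sum_filter_add_sum_filter_not S (fun t => player t = i) b
    -- upper bound for sum over T
    have hsplitT := Finset.sum_filter_add_sum_filter_not T (fun t => player t = i) c
    have hTnotb : ∑ t ∈ T.filter (fun t => ¬ player t = i), c t
        = ∑ t ∈ T.filter (fun t => ¬ player t = i), b t := by
      refine Finset.sum_congr rfl (fun t ht => ?_)
      have htp := (Finset.mem_filter.mp ht).2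
      rw [hcdef]
      dsimp only
      rw [if_neg htp]
    have hup2 : ∑ t ∈ T.filter (fun t => ¬ player t = i), b t ≤ ∑ t ∈ T, b t :=
      Finset.sum_le_sum_of_subset_of_nonneg (Finset.filter_subset _ _) (fun t _ _ => hb t)
    have hup3 : ∑ t ∈ T, b t ≤ B := hSmax T hTind
    -- bids of player i on T
    have hTic : ∑ t ∈ T.filter (fun t => player t = i), c t
        = ∑ t ∈ T.filter (fun t => player t = i), β t := by
      refine Finset.sum_congr rfl (fun t ht => ?_)
      have htp := (Finset.mem_filter.mp ht).2
      rw [hcdef]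
      dsimp only
      rw [if_pos htp]
    have hTiw : ∑ t ∈ T.filter (fun t => player t = i), β t
        ≤ (2/3) * v i (T.filter (fun t => player t = i)) := by
      have hstep : ∀ t ∈ T.filter (fun t => player t = i), β t ≤ (2/3) * w t := by
        intro t _
        rw [hβdef]
        dsimp only
        split
        · exact le_refl _
        · have := hLpos w hwL t
          linarith
      have h1 := Finset.sum_le_sum hstep
      have h2 : ∑ t ∈ T.filter (fun t => player t = i), (2/3) * w t
          = (2/3) * ∑ t ∈ T.filter (fun t => player t = i), w t := by
        rw [Finset.mul_sum]
      have h3 := (hLprop (T.filter (fun t => player t = i))).2 w hwL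
      rw [h2] at h1
      linarith
    -- greedy optimality of T under c
    have hTV : ∑ t ∈ Vi, c t ≤ ∑ t ∈ T, c t := hTmax Vi hViind
    -- Nash inequality
    -- hN : v i (S.filter ..) - ∑ .. b ≥ v i (T.filter ..) - ∑ (T.filter ..) β
    linarith [hN]
  -- summing up
  have hsum := Finset.sum_le_sum (fun i (_ : i ∈ Finset.univ) => key i)
  have hW : ∑ i : Fin n, ∑ t ∈ S.filter (fun t => player t = i), b t = B := by
    rw [hBdef]
    exact Finset.sum_fiberwise_of_maps_to (fun t _ => Finset.mem_univ (player t)) b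
  have hzb : ∑ i : Fin n, ∑ t ∈ Zf i, b t ≤ B := by
    have hdisjZ : Set.PairwiseDisjoint (↑(Finset.univ : Finset (Fin n))) Zf := by
      intro x _ y _ hxy
      show Disjoint (Zf x) (Zf y)
      have hpair := List.pairwise_iff_getElem.mp hZpw
      have hx : (x : ℕ) < Zs.length := by rw [hlenZ]; exact x.isLt
      have hy : (y : ℕ) < Zs.length := by rw [hlenZ]; exact y.isLt
      have hZfx : Zf x = Zs[(x : ℕ)] := rfl
      have hZfy : Zf y = Zs[(y : ℕ)] := rfl
      rcases lt_or_gt_of_ne (fun h => hxy (Fin.ext h)) with h | h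
      · have := hpair (x : ℕ) (y : ℕ) hx hy h
        rw [hZfx, hZfy]
        exact this
      · have := hpair (y : ℕ) (x : ℕ) hy hx h
        rw [hZfx, hZfy]
        exact this.symm
    rw [← Finset.sum_biUnion hdisjZ]
    rw [hBdef]
    apply Finset.sum_le_sum_of_subset_of_nonneg
    · intro t ht
      obtain ⟨j, -, htj⟩ := Finset.mem_biUnion.mp ht
      exact (Finset.mem_sdiff.mp (hZfsub j htj)).1
    · exact fun t _ _ => hb t
  -- final arithmetic
  have hL : ∑ i : Fin n, (2/3) * v i (Sopt.filter (fun t => player t = i))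
      = (2/3) * ∑ i : Fin n, v i (Sopt.filter (fun t => player t = i)) := by
    rw [Finset.mul_sum]
  have hR : ∑ i : Fin n,
      (2 * v i (S.filter (fun t => player t = i))
        - 2 * (∑ t ∈ S.filter (fun t => player t = i), b t)
        + (∑ t ∈ S.filter (fun t => player t = i), b t)
        + (∑ t ∈ Zf i, b t))
      = 2 * (∑ i : Fin n, v i (S.filter (fun t => player t = i)))
        - 2 * B + B + ∑ i : Fin n, ∑ t ∈ Zf i, b t := by
    rw [Finset.sum_add_distrib, Finset.sum_add_distrib, Finset.sum_sub_distrib,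
      ← Finset.mul_sum, ← Finset.mul_sum, hW]
  rw [hL, hR] at hsum
  linarith
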